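/- arXiv:2506.19758 — 2 statements merged into one kernel-verified Lean document; each statement's English description precedes it below -/
import Mathlib

section
/- If L₁ and L₂ are non-nilpotent finite-dimensional Lie algebras over a field F, then the nilpotent graph Γ_N(L₁ ⊕ L₂) is connected; indeed any two vertices are joined by a path of length at most 3. -/
section ProdLie

variable (L₁ L₂ : Type*) [LieRing L₁] [LieRing L₂]

/-- The direct sum of two Lie rings, with componentwise bracket. -/
instance Prod.instLieRing : LieRing (L₁ × L₂) where
  bracket p q := (⁅p.1, q.1⁆, ⁅p.2, q.2⁆)
  add_lie x y z := Prod.ext (add_lie x.1 y.1 z.1) (add_lie x.2 y.2 z.2)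
  lie_add x y z := Prod.ext (lie_add x.1 y.1 z.1) (lie_add x.2 y.2 z.2)
  lie_self x := Prod.ext (lie_self x.1) (lie_self x.2)
  leibniz_lie x y z := Prod.ext (leibniz_lie x.1 y.1 z.1) (leibniz_lie x.2 y.2 z.2)

/-- The direct sum of two Lie algebras. -/
instance Prod.instLieAlgebra (F : Type*) [CommRing F] [LieAlgebra F L₁] [LieAlgebra F L₂] :
    LieAlgebra F (L₁ × L₂) where
  lie_smul c x y := Prod.ext (lie_smul c x.1 y.1) (lie_smul c x.2 y.2)

end ProdLie

open LieSubalgebra LieAlgebra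

section Aux

variable {F : Type*} [Field F] {L : Type*} [LieRing L] [LieAlgebra F L]

lemma ad_pow_coe (H : LieSubalgebra F L) (x y : H) (n : ℕ) :
    ((((ad F H) x ^ n) y : H) : L) = ((ad F L (x:L)) ^ n) (y:L) := by
  induction n with
  | zero => rfl
  | succ n ih =>
    rw [pow_succ', pow_succ', Module.End.mul_apply, Module.End.mul_apply, ad_apply, ad_apply,
      LieSubalgebra.coe_bracket, ih]

lemma subalg_nilpotent_iff [Module.Finite F L] (H : LieSubalgebra F L) :
    LieRing.IsNilpotent H ↔ ∀ x y : H, ∃ n, ((ad F L (x:L)) ^ n) (y:L) = 0 := by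
  constructor
  · intro h x y
    have hx : IsNilpotent (ad F H x) := (LieAlgebra.isNilpotent_iff_forall (R := F)).mp h x
    obtain ⟨n, hn⟩ := hx
    exact ⟨n, by rw [← ad_pow_coe, hn]; simp⟩
  · intro h
    rw [LieAlgebra.isNilpotent_iff_forall (R := F)]
    intro x
    rw [Module.End.isNilpotent_iff_of_finite]
    intro y
    obtain ⟨n, hn⟩ := h x y
    refine ⟨n, ?_⟩
    have := ad_pow_coe H x y n
    rw [hn] at this
    exact Subtype.ext this

lemma nilpotent_of_le [Module.Finite F L] {K H : LieSubalgebra F L} (hle : K ≤ H)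
    (h : LieRing.IsNilpotent H) : LieRing.IsNilpotent K := by
  rw [subalg_nilpotent_iff] at h ⊢
  exact fun x y => h ⟨x, hle x.2⟩ ⟨y, hle y.2⟩

lemma abelian_span_nilpotent [Module.Finite F L] {s : Set L}
    (h : ∀ a ∈ s, ∀ b ∈ s, ⁅a, b⁆ = 0) :
    LieRing.IsNilpotent (lieSpan F L s) := by
  have hz : ∀ a ∈ Submodule.span F s, ∀ b ∈ Submodule.span F s, ⁅a, b⁆ = 0 := by
    intro a ha b hb
    induction ha using Submodule.span_induction with
    | mem u hu =>
      induction hb using Submodule.span_induction with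
      | mem v hv => exact h u hu v hv
      | zero => simp
      | add v w _ _ h1 h2 => rw [lie_add, h1, h2, add_zero]
      | smul c v _ h1 => rw [lie_smul, h1, smul_zero]
    | zero => simp
    | add u w _ _ h1 h2 => rw [add_lie, h1, h2, add_zero]
    | smul c u _ h1 => rw [smul_lie, h1, smul_zero]
  let K : LieSubalgebra F L :=
    { Submodule.span F s with
      lie_mem' := fun {a b} ha hb => by
        rw [hz a ha b hb]; exact (Submodule.span F s).zero_mem }
  have hmem : ∀ z : L, z ∈ K ↔ z ∈ Submodule.span F s := fun z => Iff.rfl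
  have hle : lieSpan F L s ≤ K := lieSpan_le.mpr (by
    intro z hzs
    exact (hmem z).mpr (Submodule.subset_span hzs))
  rw [subalg_nilpotent_iff]
  intro x y
  refine ⟨1, ?_⟩
  rw [pow_one, ad_apply]
  exact hz _ ((hmem _).mp (hle x.2)) _ ((hmem _).mp (hle y.2))

lemma pair_nilpotent_of_lie_eq_zero [Module.Finite F L] {p q : L} (h : ⁅p, q⁆ = 0) :
    LieRing.IsNilpotent (lieSpan F L {p, q}) := by
  apply abelian_span_nilpotent
  intro a ha b hb
  simp only [Set.mem_insert_iff, Set.mem_singleton_iff] at ha hb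
  rcases ha with rfl | rfl <;> rcases hb with rfl | rfl
  · exact lie_self _
  · exact h
  · rw [← lie_skew, h, neg_zero]
  · exact lie_self _

lemma zero_mem_nilSet_aux [Module.Finite F L] (y : L) :
    LieRing.IsNilpotent (lieSpan F L {(0:L), y}) :=
  pair_nilpotent_of_lie_eq_zero (zero_lie y)
end Aux
section ProdAux
variable {F : Type*} [Field F] {L₁ L₂ : Type*} [LieRing L₁] [LieRing L₂]
  [LieAlgebra F L₁] [LieAlgebra F L₂]

lemma ad_pow_prod (p q : L₁ × L₂) (n : ℕ) :
    ((ad F (L₁ × L₂) p) ^ n) q = (((ad F L₁ p.1) ^ n) q.1, ((ad F L₂ p.2) ^ n) q.2) := by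
  induction n with
  | zero => rfl
  | succ n ih =>
    rw [pow_succ', Module.End.mul_apply, ih, pow_succ', pow_succ',
      Module.End.mul_apply, Module.End.mul_apply]
    rfl

/-- The product of two Lie subalgebras. -/
def prodSubalg (H₁ : LieSubalgebra F L₁) (H₂ : LieSubalgebra F L₂) :
    LieSubalgebra F (L₁ × L₂) :=
  { (H₁ : Submodule F L₁).prod (H₂ : Submodule F L₂) with
    lie_mem' := fun {p q} hp hq => ⟨H₁.lie_mem hp.1 hq.1, H₂.lie_mem hp.2 hq.2⟩ }

lemma mem_prodSubalg {H₁ : LieSubalgebra F L₁} {H₂ : LieSubalgebra F L₂} {p : L₁ × L₂} :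
    p ∈ prodSubalg H₁ H₂ ↔ p.1 ∈ H₁ ∧ p.2 ∈ H₂ := Iff.rfl

lemma prodSubalg_nilpotent [Module.Finite F L₁] [Module.Finite F L₂]
    {H₁ : LieSubalgebra F L₁} {H₂ : LieSubalgebra F L₂}
    (h1 : LieRing.IsNilpotent H₁) (h2 : LieRing.IsNilpotent H₂) :
    LieRing.IsNilpotent (prodSubalg H₁ H₂) := by
  rw [subalg_nilpotent_iff] at h1 h2 ⊢
  intro x y
  obtain ⟨n₁, hn₁⟩ := h1 ⟨(x:L₁×L₂).1, x.2.1⟩ ⟨(y:L₁×L₂).1, y.2.1⟩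
  obtain ⟨n₂, hn₂⟩ := h2 ⟨(x:L₁×L₂).2, x.2.2⟩ ⟨(y:L₁×L₂).2, y.2.2⟩
  refine ⟨max n₁ n₂, ?_⟩
  rw [ad_pow_prod]
  refine Prod.ext ?_ ?_
  · exact Module.End.pow_map_zero_of_le (le_max_left _ _) hn₁
  · exact Module.End.pow_map_zero_of_le (le_max_right _ _) hn₂

/-- First projection as a Lie algebra homomorphism. -/
def fstLieHom : (L₁ × L₂) →ₗ⁅F⁆ L₁ := { LinearMap.fst F L₁ L₂ with map_lie' := rfl }

/-- Second projection as a Lie algebra homomorphism. -/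
def sndLieHom : (L₁ × L₂) →ₗ⁅F⁆ L₂ := { LinearMap.snd F L₁ L₂ with map_lie' := rfl }

lemma span_pair_fst_nilpotent [Module.Finite F L₁] [Module.Finite F L₂] {p q : L₁ × L₂}
    (h : LieRing.IsNilpotent (lieSpan F (L₁ × L₂) {p, q})) :
    LieRing.IsNilpotent (lieSpan F L₁ {p.1, q.1}) := by
  set P := lieSpan F (L₁ × L₂) {p, q} with hP
  have hle : lieSpan F L₁ {p.1, q.1} ≤ P.map fstLieHom := by
    rw [lieSpan_le]
    rintro a (rfl | ha)
    · exact ⟨p, subset_lieSpan (Set.mem_insert _ _), rfl⟩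
    · rw [Set.mem_singleton_iff] at ha
      subst ha
      exact ⟨q, subset_lieSpan (Set.mem_insert_of_mem _ rfl), rfl⟩
  rw [subalg_nilpotent_iff] at h
  apply nilpotent_of_le hle
  rw [subalg_nilpotent_iff]
  intro x y
  obtain ⟨a, ha, hax⟩ := (mem_map _ _ _).mp x.2
  obtain ⟨b, hb, hby⟩ := (mem_map _ _ _).mp y.2
  obtain ⟨n, hn⟩ := h ⟨a, ha⟩ ⟨b, hb⟩
  refine ⟨n, ?_⟩
  rw [ad_pow_prod] at hn
  have : ((ad F L₁ a.1) ^ n) b.1 = 0 := congrArg Prod.fst hn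
  rwa [show ((x : L₁) : L₁) = a.1 from hax.symm, show ((y : L₁) : L₁) = b.1 from hby.symm]

lemma span_pair_snd_nilpotent [Module.Finite F L₁] [Module.Finite F L₂] {p q : L₁ × L₂}
    (h : LieRing.IsNilpotent (lieSpan F (L₁ × L₂) {p, q})) :
    LieRing.IsNilpotent (lieSpan F L₂ {p.2, q.2}) := by
  set P := lieSpan F (L₁ × L₂) {p, q} with hP
  have hle : lieSpan F L₂ {p.2, q.2} ≤ P.map sndLieHom := by
    rw [lieSpan_le]
    rintro a (rfl | ha)
    · exact ⟨p, subset_lieSpan (Set.mem_insert _ _), rfl⟩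
    · rw [Set.mem_singleton_iff] at ha
      subst ha
      exact ⟨q, subset_lieSpan (Set.mem_insert_of_mem _ rfl), rfl⟩
  rw [subalg_nilpotent_iff] at h
  apply nilpotent_of_le hle
  rw [subalg_nilpotent_iff]
  intro x y
  obtain ⟨a, ha, hax⟩ := (mem_map _ _ _).mp x.2
  obtain ⟨b, hb, hby⟩ := (mem_map _ _ _).mp y.2
  obtain ⟨n, hn⟩ := h ⟨a, ha⟩ ⟨b, hb⟩
  refine ⟨n, ?_⟩
  rw [ad_pow_prod] at hn
  have : ((ad F L₂ a.2) ^ n) b.2 = 0 := congrArg Prod.snd hn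
  rwa [show ((x : L₂) : L₂) = a.2 from hax.symm, show ((y : L₂) : L₂) = b.2 from hby.symm]

end ProdAux

/-- The nilpotentizer of a Lie algebra `L`: the set of elements `x` such that the Lie
subalgebra generated by `x` and `y` is nilpotent for every `y ∈ L`. -/
def nilSet (F : Type*) [Field F] (L : Type*) [LieRing L] [LieAlgebra F L] : Set L :=
  {x : L | ∀ y : L, LieRing.IsNilpotent (LieSubalgebra.lieSpan F L {x, y})}

/-- The nilpotent graph of a Lie algebra `L`: vertices are the elements of
`L \\ nil(L)`, and two distinct vertices are adjacent iff the Lie subalgebra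
they generate is nilpotent. -/
def nilGraph (F : Type*) [Field F] (L : Type*) [LieRing L] [LieAlgebra F L] :
    SimpleGraph {x : L // x ∉ nilSet F L} where
  Adj x y := x ≠ y ∧
    LieRing.IsNilpotent (LieSubalgebra.lieSpan F L {(x : L), (y : L)})
  symm := by
    constructor
    rintro x y ⟨h1, h2⟩
    exact ⟨h1.symm, by rwa [Set.pair_comm]⟩
  loopless := by constructor; rintro x ⟨h1, -⟩; exact h1 rfl


section Main
variable {F : Type*} [Field F] {L₁ L₂ : Type*} [LieRing L₁] [LieRing L₂]
  [LieAlgebra F L₁] [LieAlgebra F L₂] [Module.Finite F L₁] [Module.Finite F L₂]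

lemma zero_mem_nilSet : (0 : L₁) ∈ nilSet F L₁ :=
  fun y => pair_nilpotent_of_lie_eq_zero (zero_lie y)

lemma span_pair_le_prodSubalg (p q : L₁ × L₂) :
    lieSpan F (L₁ × L₂) {p, q} ≤
      prodSubalg (lieSpan F L₁ {p.1, q.1}) (lieSpan F L₂ {p.2, q.2}) := by
  rw [lieSpan_le]
  rintro z (rfl | hz)
  · exact ⟨subset_lieSpan (Set.mem_insert _ _), subset_lieSpan (Set.mem_insert _ _)⟩
  · rw [Set.mem_singleton_iff] at hz; subst hz
    exact ⟨subset_lieSpan (Set.mem_insert_of_mem _ rfl),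
      subset_lieSpan (Set.mem_insert_of_mem _ rfl)⟩

lemma mem_nilSet_prod {a : L₁} {b : L₂} (ha : a ∈ nilSet F L₁) (hb : b ∈ nilSet F L₂) :
    (a, b) ∈ nilSet F (L₁ × L₂) := fun q =>
  nilpotent_of_le (span_pair_le_prodSubalg (a, b) q)
    (prodSubalg_nilpotent (ha q.1) (hb q.2))

lemma not_mem_nilSet_pair_fst {m : L₁} (hm : m ∉ nilSet F L₁) (b : L₂) :
    (m, b) ∉ nilSet F (L₁ × L₂) := by
  intro h
  apply hm
  intro y
  exact span_pair_fst_nilpotent (p := (m, b)) (q := (y, 0)) (h (y, 0))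

lemma not_mem_nilSet_pair_snd {n : L₂} (hn : n ∉ nilSet F L₂) (a : L₁) :
    (a, n) ∉ nilSet F (L₁ × L₂) := by
  intro h
  apply hn
  intro y
  exact span_pair_snd_nilpotent (p := (a, n)) (q := (0, y)) (h (0, y))

lemma exists_not_nilSet (h : ¬ LieRing.IsNilpotent L₁) :
    ∃ m : L₁, m ∉ nilSet F L₁ := by
  by_contra hc
  push_neg at hc
  apply h
  rw [LieAlgebra.isNilpotent_iff_forall (R := F)]
  intro z
  rw [Module.End.isNilpotent_iff_of_finite]
  intro y
  have hz := hc z y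
  rw [subalg_nilpotent_iff] at hz
  exact hz ⟨z, subset_lieSpan (Set.mem_insert _ _)⟩
    ⟨y, subset_lieSpan (Set.mem_insert_of_mem _ rfl)⟩

end Main

theorem nilGraph_prod_connected
    (F : Type*) [Field F] (L₁ L₂ : Type*) [LieRing L₁] [LieRing L₂]
    [LieAlgebra F L₁] [LieAlgebra F L₂] [Module.Finite F L₁] [Module.Finite F L₂]
    (h₁ : ¬ LieRing.IsNilpotent L₁) (h₂ : ¬ LieRing.IsNilpotent L₂) :
    (nilGraph F (L₁ × L₂)).Connected ∧
      ∀ u v : {x : L₁ × L₂ // x ∉ nilSet F (L₁ × L₂)},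
        (nilGraph F (L₁ × L₂)).dist u v ≤ 3 := by
  set G := nilGraph F (L₁ × L₂) with hG
  obtain ⟨x₁, hx₁⟩ := exists_not_nilSet (F := F) h₁
  obtain ⟨x₂, hx₂⟩ := exists_not_nilSet (F := F) h₂
  have hne1 : ∀ {m : L₁}, m ∉ nilSet F L₁ → m ≠ 0 :=
    fun hm h0 => hm (h0 ▸ zero_mem_nilSet)
  have hne2 : ∀ {n : L₂}, n ∉ nilSet F L₂ → n ≠ 0 :=
    fun hn h0 => hn (h0 ▸ zero_mem_nilSet)
  -- step towards a left-sided vertex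
  have step1 : ∀ u : {x : L₁ × L₂ // x ∉ nilSet F (L₁ × L₂)},
      ∃ A : {x : L₁ × L₂ // x ∉ nilSet F (L₁ × L₂)},
        (∃ m : L₁, m ∉ nilSet F L₁ ∧ (A : L₁ × L₂) = (m, 0)) ∧ (u = A ∨ G.Adj u A) := by
    rintro ⟨⟨a, b⟩, hu⟩
    by_cases hA : a ∈ nilSet F L₁
    · -- then b ∉ nilSet L₂
      have hb : b ∉ nilSet F L₂ := fun hb => hu (mem_nilSet_prod hA hb)
      refine ⟨⟨(x₁, 0), not_mem_nilSet_pair_fst hx₁ 0⟩, ⟨x₁, hx₁, rfl⟩, Or.inr ?_⟩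
      constructor
      · intro hcontra
        exact hne2 hb (congrArg (Prod.snd ∘ Subtype.val) hcontra)
      · refine nilpotent_of_le (span_pair_le_prodSubalg (a, b) (x₁, 0)) ?_
        exact prodSubalg_nilpotent (hA x₁) (pair_nilpotent_of_lie_eq_zero (lie_zero b))
    · refine ⟨⟨(a, 0), not_mem_nilSet_pair_fst hA 0⟩, ⟨a, hA, rfl⟩, ?_⟩
      by_cases hb0 : b = 0
      · exact Or.inl (Subtype.ext (Prod.ext rfl hb0))
      · refine Or.inr ⟨?_, ?_⟩
        · intro hcontra
          exact hb0 (congrArg (Prod.snd ∘ Subtype.val) hcontra)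
        · exact pair_nilpotent_of_lie_eq_zero (Prod.ext (lie_self a) (lie_zero b))
  -- step towards a right-sided vertex
  have step2 : ∀ v : {x : L₁ × L₂ // x ∉ nilSet F (L₁ × L₂)},
      ∃ B : {x : L₁ × L₂ // x ∉ nilSet F (L₁ × L₂)},
        (∃ n : L₂, n ∉ nilSet F L₂ ∧ (B : L₁ × L₂) = (0, n)) ∧ (v = B ∨ G.Adj v B) := by
    rintro ⟨⟨c, d⟩, hv⟩
    by_cases hD : d ∈ nilSet F L₂
    · have hc : c ∉ nilSet F L₁ := fun hc => hv (mem_nilSet_prod hc hD)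
      refine ⟨⟨(0, x₂), not_mem_nilSet_pair_snd hx₂ 0⟩, ⟨x₂, hx₂, rfl⟩, Or.inr ?_⟩
      constructor
      · intro hcontra
        exact hne1 hc (congrArg (Prod.fst ∘ Subtype.val) hcontra)
      · refine nilpotent_of_le (span_pair_le_prodSubalg (c, d) (0, x₂)) ?_
        exact prodSubalg_nilpotent (pair_nilpotent_of_lie_eq_zero (lie_zero c)) (hD x₂)
    · refine ⟨⟨(0, d), not_mem_nilSet_pair_snd hD 0⟩, ⟨d, hD, rfl⟩, ?_⟩
      by_cases hc0 : c = 0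
      · exact Or.inl (Subtype.ext (Prod.ext hc0 rfl))
      · refine Or.inr ⟨?_, ?_⟩
        · intro hcontra
          exact hc0 (congrArg (Prod.fst ∘ Subtype.val) hcontra)
        · exact pair_nilpotent_of_lie_eq_zero (Prod.ext (lie_zero c) (lie_self d))
  -- the middle edge
  have middle : ∀ (A B : {x : L₁ × L₂ // x ∉ nilSet F (L₁ × L₂)}),
      (∃ m : L₁, m ∉ nilSet F L₁ ∧ (A : L₁ × L₂) = (m, 0)) →
      (∃ n : L₂, n ∉ nilSet F L₂ ∧ (B : L₁ × L₂) = (0, n)) → G.Adj A B := by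
    rintro A B ⟨m, hm, hA⟩ ⟨n, hn, hB⟩
    constructor
    · intro hcontra
      apply hne1 hm
      have : (m, (0:L₂)) = ((0:L₁), n) := by rw [← hA, ← hB, hcontra]
      exact congrArg Prod.fst this
    · rw [hA, hB]
      exact pair_nilpotent_of_lie_eq_zero (Prod.ext (lie_zero m) (zero_lie n))
  have hreach : ∀ {u w : {x : L₁ × L₂ // x ∉ nilSet F (L₁ × L₂)}},
      (u = w ∨ G.Adj u w) → G.Reachable u w := by
    rintro u w (rfl | h)
    · exact SimpleGraph.Reachable.refl u
    · exact h.reachable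
  have hnonempty : Nonempty {x : L₁ × L₂ // x ∉ nilSet F (L₁ × L₂)} :=
    ⟨⟨(x₁, 0), not_mem_nilSet_pair_fst hx₁ 0⟩⟩
  have hconn : G.Connected := by
    refine SimpleGraph.Connected.mk ?_
    intro u v
    obtain ⟨A, hAl, huA⟩ := step1 u
    obtain ⟨B, hBr, hvB⟩ := step2 v
    exact ((hreach huA).trans (middle A B hAl hBr).reachable).trans (hreach hvB).symm
  refine ⟨hconn, fun u v => ?_⟩
  have hd1 : ∀ {u w : {x : L₁ × L₂ // x ∉ nilSet F (L₁ × L₂)}},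
      (u = w ∨ G.Adj u w) → G.dist u w ≤ 1 := by
    rintro u w (rfl | h)
    · rw [SimpleGraph.dist_self]
      exact Nat.zero_le 1
    · exact (SimpleGraph.dist_eq_one_iff_adj.mpr h).le
  obtain ⟨A, hAl, huA⟩ := step1 u
  obtain ⟨B, hBr, hvB⟩ := step2 v
  calc G.dist u v ≤ G.dist u A + G.dist A v := hconn.dist_triangle
    _ ≤ G.dist u A + (G.dist A B + G.dist B v) := by
        exact Nat.add_le_add_left hconn.dist_triangle _
    _ ≤ 1 + (1 + 1) := by
        refine Nat.add_le_add (hd1 huA) (Nat.add_le_add (hd1 (Or.inr (middle A B hAl hBr))) ?_)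
        rw [SimpleGraph.dist_comm]
        exact hd1 hvB
    _ = 3 := rfl
end

section
/- The nilpotent graph of t(2, F_q) consists of exactly q+1 connected components, each of which is a complete graph on q(q−1) vertices. -/
attribute [local instance 100] LieRing.ofAssociativeRing

/-- The Lie algebra `t(2,F)` of upper triangular `2 × 2` matrices over `F`,
as a Lie subalgebra of the matrix Lie algebra. -/
def t2 (F : Type*) [Field F] : LieSubalgebra F (Matrix (Fin 2) (Fin 2) F) where
  carrier := {A | A 1 0 = 0}
  add_mem' := by intro a b ha hb; simp_all [Set.mem_setOf_eq, Matrix.add_apply]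
  zero_mem' := by simp
  smul_mem' := by intro c a ha; simp_all [Set.mem_setOf_eq, Matrix.smul_apply]
  lie_mem' := by
    intro a b ha hb
    simp_all [Set.mem_setOf_eq, Ring.lie_def, Matrix.sub_apply, Matrix.mul_apply,
      Fin.sum_univ_two]

namespace T2Aux
variable {F : Type*} [Field F]

lemma mem_t2 {M : Matrix (Fin 2) (Fin 2) F} : M ∈ t2 F ↔ M 1 0 = 0 := Iff.rfl

def dd (x : t2 F) : F := (x : Matrix (Fin 2) (Fin 2) F) 0 0 - (x : Matrix (Fin 2) (Fin 2) F) 1 1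
def bb (x : t2 F) : F := (x : Matrix (Fin 2) (Fin 2) F) 0 1
def cross (x y : t2 F) : F := dd x * bb y - bb x * dd y

def Et2 : t2 F := ⟨!![0,1;0,0], by simp [mem_t2]⟩

lemma coe_smul' (c : F) (x : t2 F) :
    ((c • x : t2 F) : Matrix (Fin 2) (Fin 2) F) = c • (x : Matrix (Fin 2) (Fin 2) F) := rfl

lemma lie_eq (x y : t2 F) : ⁅x, y⁆ = cross x y • Et2 := by
  apply Subtype.ext
  have hx := x.2
  have hy := y.2
  simp only [mem_t2] at hx hy  -- maybe x.2 : x.1 ∈ t2 F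
  show ⁅(x : Matrix (Fin 2) (Fin 2) F), (y : Matrix (Fin 2) (Fin 2) F)⁆ = _
  ext i j
  fin_cases i <;> fin_cases j <;>
    simp [Ring.lie_def, Matrix.mul_apply, Fin.sum_univ_two, cross, dd, bb, Et2, hx, hy, coe_smul', Matrix.smul_apply] <;> ring


lemma dd_add (x y : t2 F) : dd (x + y) = dd x + dd y := by
  simp [dd]; ring
lemma bb_add (x y : t2 F) : bb (x + y) = bb x + bb y := by
  simp [bb]
lemma dd_smul (c : F) (x : t2 F) : dd (c • x) = c * dd x := by
  simp [dd, coe_smul']; ring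
lemma bb_smul (c : F) (x : t2 F) : bb (c • x) = c * bb x := by
  simp [bb, coe_smul']
lemma dd_zero : dd (0 : t2 F) = 0 := by simp [dd]
lemma bb_zero : bb (0 : t2 F) = 0 := by simp [bb]
lemma dd_E : dd (Et2 : t2 F) = 0 := by simp [dd, Et2]
lemma bb_E : bb (Et2 : t2 F) = 1 := by simp [bb, Et2]

lemma dd_lie (x y : t2 F) : dd ⁅x, y⁆ = 0 := by
  rw [lie_eq, dd_smul, dd_E, mul_zero]
lemma bb_lie (x y : t2 F) : bb ⁅x, y⁆ = cross x y := by
  rw [lie_eq, bb_smul, bb_E, mul_one]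

/-- The abelian subalgebra of `t2 F` of elements whose direction `(dd, bb)`
lies on the line spanned by `(p, r)`. -/
def Ab (p r : F) : LieSubalgebra F (t2 F) where
  carrier := {m | dd m * r = bb m * p}
  add_mem' := by
    intro a b ha hb
    simp only [Set.mem_setOf_eq, dd_add, bb_add] at *
    ring_nf
    linear_combination ha + hb
  zero_mem' := by simp [dd_zero, bb_zero]
  smul_mem' := by
    intro c a ha
    simp only [Set.mem_setOf_eq, dd_smul, bb_smul] at *
    linear_combination c * ha
  lie_mem' := by
    intro a b ha hb
    simp only [Set.mem_setOf_eq, dd_lie, bb_lie, cross] at *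
    linear_combination (dd a) * hb - (dd b) * ha

lemma cross_eq_zero_of_mem_Ab {p r : F} (hpr : p ≠ 0 ∨ r ≠ 0) {m n : t2 F}
    (hm : m ∈ Ab p r) (hn : n ∈ Ab p r) : cross m n = 0 := by
  have hm' : dd m * r = bb m * p := hm
  have hn' : dd n * r = bb n * p := hn
  rcases hpr with hp | hr
  · have : cross m n * p = 0 := by
      simp only [cross]
      linear_combination (dd n) * hm' - (dd m) * hn'
    exact (mul_eq_zero.mp this).resolve_right hp
  · rcases eq_or_ne p 0 with hp | hp
    · have h1 : dd m = 0 := by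
        have := hm'; rw [hp, mul_zero] at this
        exact (mul_eq_zero.mp this).resolve_right hr
      have h2 : dd n = 0 := by
        have := hn'; rw [hp, mul_zero] at this
        exact (mul_eq_zero.mp this).resolve_right hr
      simp [cross, h1, h2]
    · have : cross m n * p = 0 := by
        simp only [cross]
        linear_combination (dd n) * hm' - (dd m) * hn'
      exact (mul_eq_zero.mp this).resolve_right hp

lemma isLieAbelian_Ab {p r : F} (hpr : p ≠ 0 ∨ r ≠ 0) : IsLieAbelian (Ab (F := F) p r) := by
  constructor
  intro m n
  apply Subtype.ext
  have h1 : ((⁅m, n⁆ : Ab p r) : t2 F) = ⁅(m : t2 F), (n : t2 F)⁆ := rfl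
  rw [h1, lie_eq, cross_eq_zero_of_mem_Ab hpr m.2 n.2, zero_smul]
  rfl

lemma nilpotent_of_le_abelian {L : Type*} [LieRing L] [LieAlgebra F L]
    {S A : LieSubalgebra F L} (h : S ≤ A) (hA : IsLieAbelian A) :
    LieRing.IsNilpotent S := by
  have : IsLieAbelian S := by
    constructor
    intro a b
    apply Subtype.ext
    have h0 : ⁅(⟨a.1, h a.2⟩ : A), (⟨b.1, h b.2⟩ : A)⁆ = (0 : A) := hA.trivial _ _
    have h1 := congrArg (Subtype.val) h0
    exact h1
  infer_instance

lemma not_nilpotent_of_eigen {L : Type*} [LieRing L] [LieAlgebra F L]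
    (z e : L) (he : e ≠ 0) {c : F} (hc : c ≠ 0) (h : ⁅z, e⁆ = c • e) :
    ¬ LieRing.IsNilpotent L := by
  intro hN
  obtain ⟨k, hk⟩ := (LieModule.isNilpotent_iff F L L).mp hN
  have key : ∀ k, e ∈ LieModule.lowerCentralSeries F L L k := by
    intro k
    induction k with
    | zero => simp [LieModule.lowerCentralSeries_zero]
    | succ n ih =>
      rw [LieModule.lowerCentralSeries_succ]
      have hmem : ⁅z, e⁆ ∈ ⁅(⊤ : LieIdeal F L), LieModule.lowerCentralSeries F L L n⁆ :=
        LieSubmodule.lie_mem_lie (LieSubmodule.mem_top z) ih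
      have : e = c⁻¹ • ⁅z, e⁆ := by rw [h, smul_smul, inv_mul_cancel₀ hc, one_smul]
      rw [this]
      exact Submodule.smul_mem _ _ hmem
  have := key k
  rw [hk] at this
  exact he (by simpa using this)


lemma Et2_ne_zero : (Et2 : t2 F) ≠ 0 := by
  intro h
  have := congrArg bb h
  rw [bb_E, bb_zero] at this
  exact one_ne_zero this

lemma nilpotent_of_cross {x y : t2 F} (hx : ¬(dd x = 0 ∧ bb x = 0)) (h : cross x y = 0) :
    LieRing.IsNilpotent (LieSubalgebra.lieSpan F (t2 F) {x, y}) := by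
  apply nilpotent_of_le_abelian (A := Ab (dd x) (bb x))
  · rw [LieSubalgebra.lieSpan_le]
    rw [Set.insert_subset_iff, Set.singleton_subset_iff]
    constructor
    · show dd x * bb x = bb x * dd x
      ring
    · show dd y * bb x = bb y * dd x
      simp only [cross] at h
      linear_combination -h
  · apply isLieAbelian_Ab
    push_neg at hx
    rcases eq_or_ne (dd x) 0 with h' | h'
    · exact Or.inr (hx h')
    · exact Or.inl h'

lemma nilpotent_of_scalar {x : t2 F} (hx : dd x = 0 ∧ bb x = 0) (y : t2 F) :
    LieRing.IsNilpotent (LieSubalgebra.lieSpan F (t2 F) {x, y}) := by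
  by_cases hy : dd y = 0 ∧ bb y = 0
  · apply nilpotent_of_le_abelian (A := Ab 1 0)
    · rw [LieSubalgebra.lieSpan_le]
      rw [Set.insert_subset_iff, Set.singleton_subset_iff]
      constructor
      · show dd x * 0 = bb x * 1
        rw [hx.2]; ring
      · show dd y * 0 = bb y * 1
        rw [hy.2]; ring
    · exact isLieAbelian_Ab (Or.inl one_ne_zero)
  · apply nilpotent_of_le_abelian (A := Ab (dd y) (bb y))
    · rw [LieSubalgebra.lieSpan_le]
      rw [Set.insert_subset_iff, Set.singleton_subset_iff]
      constructor
      · show dd x * bb y = bb x * dd y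
        rw [hx.1, hx.2]; ring
      · show dd y * bb y = bb y * dd y
        ring
    · apply isLieAbelian_Ab
      push_neg at hy
      rcases eq_or_ne (dd y) 0 with h' | h'
      · exact Or.inr (hy h')
      · exact Or.inl h'

lemma not_nilpotent_of_cross {x y : t2 F} (h : cross x y ≠ 0) :
    ¬ LieRing.IsNilpotent (LieSubalgebra.lieSpan F (t2 F) {x, y}) := by
  set S := LieSubalgebra.lieSpan F (t2 F) {x, y} with hS
  have hxS : x ∈ S := LieSubalgebra.subset_lieSpan (by simp)
  have hyS : y ∈ S := LieSubalgebra.subset_lieSpan (by simp)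
  set X : S := ⟨x, hxS⟩
  set Y : S := ⟨y, hyS⟩
  set e : S := ⁅X, Y⁆ with he
  have hecoe : (e : t2 F) = cross x y • Et2 := by
    have : (e : t2 F) = ⁅x, y⁆ := rfl
    rw [this, lie_eq]
  have hene : e ≠ 0 := by
    intro h0
    have h1 : cross x y • (Et2 : t2 F) = 0 := by rw [← hecoe, h0]; rfl
    rcases smul_eq_zero.mp h1 with h2 | h2
    · exact h h2
    · exact Et2_ne_zero h2
  have key : ∀ z : S, ⁅(z : t2 F), (e : t2 F)⁆ = dd (z : t2 F) • (e : t2 F) := by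
    intro z
    rw [hecoe, lie_smul, lie_eq]
    have : cross (z : t2 F) Et2 = dd (z : t2 F) := by
      simp [cross, dd_E, bb_E]
    rw [this, smul_smul, smul_smul, mul_comm]
  rcases eq_or_ne (dd x) 0 with hdx | hdx
  · rcases eq_or_ne (dd y) 0 with hdy | hdy
    · exact absurd (by simp [cross, hdx, hdy]) h
    · apply not_nilpotent_of_eigen Y e hene hdy
      apply Subtype.ext
      have : ((⁅Y, e⁆ : S) : t2 F) = ⁅(Y : t2 F), (e : t2 F)⁆ := rfl
      rw [this, key Y]
      rfl
  · apply not_nilpotent_of_eigen X e hene hdx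
    apply Subtype.ext
    have : ((⁅X, e⁆ : S) : t2 F) = ⁅(X : t2 F), (e : t2 F)⁆ := rfl
    rw [this, key X]
    rfl

def Ht2 : t2 F := ⟨!![1,0;0,0], by simp [mem_t2]⟩

lemma dd_H : dd (Ht2 : t2 F) = 1 := by simp [dd, Ht2]
lemma bb_H : bb (Ht2 : t2 F) = 0 := by simp [bb, Ht2]

lemma mem_nilSet_iff (x : t2 F) : x ∈ nilSet F (t2 F) ↔ dd x = 0 ∧ bb x = 0 := by
  constructor
  · intro hx
    by_contra hc
    rcases eq_or_ne (dd x) 0 with hdx | hdx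
    · have hbx : bb x ≠ 0 := fun h' => hc ⟨hdx, h'⟩
      exact not_nilpotent_of_cross (x := x) (y := Ht2)
        (by simp [cross, dd_H, bb_H, hdx, hbx]) (hx Ht2)
    · exact not_nilpotent_of_cross (x := x) (y := Et2)
        (by simp [cross, dd_E, bb_E, hdx]) (hx Et2)
  · intro hx y
    exact nilpotent_of_scalar hx y

lemma adj_iff (u v : {x : t2 F // x ∉ nilSet F (t2 F)}) :
    (nilGraph F (t2 F)).Adj u v ↔ u ≠ v ∧ cross u.1 v.1 = 0 := by
  have hu : ¬(dd u.1 = 0 ∧ bb u.1 = 0) := fun h => u.2 ((mem_nilSet_iff u.1).mpr h)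
  constructor
  · rintro ⟨h1, h2⟩
    refine ⟨h1, ?_⟩
    by_contra hc
    exact not_nilpotent_of_cross hc h2
  · rintro ⟨h1, h2⟩
    exact ⟨h1, nilpotent_of_cross hu h2⟩


open scoped Classical in
/-- The direction invariant of a vertex. -/
noncomputable def dir (v : {x : t2 F // x ∉ nilSet F (t2 F)}) : Option F :=
  if dd v.1 = 0 then none else some (bb v.1 / dd v.1)

lemma vertex_prop (v : {x : t2 F // x ∉ nilSet F (t2 F)}) : ¬(dd v.1 = 0 ∧ bb v.1 = 0) :=
  fun h => v.2 ((mem_nilSet_iff v.1).mpr h)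

lemma dir_eq_iff_cross (u v : {x : t2 F // x ∉ nilSet F (t2 F)}) :
    dir u = dir v ↔ cross u.1 v.1 = 0 := by
  classical
  unfold dir
  rcases eq_or_ne (dd u.1) 0 with hu | hu <;> rcases eq_or_ne (dd v.1) 0 with hv | hv
  · rw [if_pos hu, if_pos hv]
    simp [cross, hu, hv]
  · have hbu : bb u.1 ≠ 0 := fun h => vertex_prop u ⟨hu, h⟩
    rw [if_pos hu, if_neg hv]
    simp [cross, hu, hbu, hv, sub_eq_zero]
  · have hbv : bb v.1 ≠ 0 := fun h => vertex_prop v ⟨hv, h⟩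
    rw [if_neg hu, if_pos hv]
    simp [cross, hv, hbv, hu, sub_eq_zero]
  · rw [if_neg hu, if_neg hv, Option.some_inj, div_eq_div_iff hu hv, cross, sub_eq_zero]
    constructor
    · intro h; linear_combination -h
    · intro h; linear_combination -h

lemma dir_eq_of_adj {u v : {x : t2 F // x ∉ nilSet F (t2 F)}}
    (h : (nilGraph F (t2 F)).Adj u v) : dir u = dir v :=
  (dir_eq_iff_cross u v).mpr ((adj_iff u v).mp h).2

lemma dir_eq_of_walk {u v : {x : t2 F // x ∉ nilSet F (t2 F)}}
    (p : (nilGraph F (t2 F)).Walk u v) : dir u = dir v := by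
  induction p with
  | nil => rfl
  | cons h _ ih => exact (dir_eq_of_adj h).trans ih

/-- The direction invariant of a connected component. -/
noncomputable def cdir : (nilGraph F (t2 F)).ConnectedComponent → Option F :=
  SimpleGraph.ConnectedComponent.lift dir (fun _ _ p _ => dir_eq_of_walk p)

lemma mk_eq_iff_dir (u v : {x : t2 F // x ∉ nilSet F (t2 F)}) :
    (nilGraph F (t2 F)).connectedComponentMk u = (nilGraph F (t2 F)).connectedComponentMk v ↔
      dir u = dir v := by
  constructor
  · intro h
    have := congrArg cdir h
    simpa [cdir] using this
  · intro h
    rcases eq_or_ne u v with rfl | hne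
    · rfl
    · exact SimpleGraph.ConnectedComponent.sound
        ((adj_iff u v).mpr ⟨hne, (dir_eq_iff_cross u v).mp h⟩).reachable

/-- An explicit element of `t2`. -/
def mkT2 (a β δ : F) : t2 F := ⟨!![a, β; 0, a - δ], by simp [mem_t2]⟩

@[simp] lemma dd_mkT2 (a β δ : F) : dd (mkT2 a β δ) = δ := by
  simp [dd, mkT2]

@[simp] lemma bb_mkT2 (a β δ : F) : bb (mkT2 a β δ) = β := by
  simp [bb, mkT2]

/-- An explicit vertex. -/
def mkVtx (a β δ : F) (h : ¬(δ = 0 ∧ β = 0)) : {x : t2 F // x ∉ nilSet F (t2 F)} :=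
  ⟨mkT2 a β δ, by
    rw [mem_nilSet_iff]
    simpa using h⟩


lemma dir_some {v : {x : t2 F // x ∉ nilSet F (t2 F)}} {r : F} (hv : dir v = some r) :
    dd v.1 ≠ 0 ∧ bb v.1 = dd v.1 * r := by
  classical
  unfold dir at hv
  by_cases h : dd v.1 = 0
  · rw [if_pos h] at hv; exact absurd hv (by simp)
  · rw [if_neg h, Option.some_inj] at hv
    exact ⟨h, by rw [← hv]; field_simp⟩

lemma dir_none {v : {x : t2 F // x ∉ nilSet F (t2 F)}} (hv : dir v = none) :
    dd v.1 = 0 ∧ bb v.1 ≠ 0 := by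
  classical
  unfold dir at hv
  by_cases h : dd v.1 = 0
  · exact ⟨h, fun hb => vertex_prop v ⟨h, hb⟩⟩
  · rw [if_neg h] at hv; exact absurd hv (by simp)

lemma coe_mkVtx (a β δ : F) (h : ¬(δ = 0 ∧ β = 0)) :
    ((mkVtx a β δ h).1 : Matrix (Fin 2) (Fin 2) F) = !![a, β; 0, a - δ] := rfl

/-- Vertices of a fixed nonzero direction `some r`. -/
noncomputable def fiberSome (r : F) :
    F × Fˣ ≃ {v : {x : t2 F // x ∉ nilSet F (t2 F)} // dir v = some r} where
  toFun p := ⟨mkVtx p.1 (p.2 * r) p.2 (fun h => p.2.ne_zero h.1), by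
    classical
    unfold dir
    rw [if_neg (by simp [mkVtx, Units.ne_zero] : ¬ dd (mkVtx p.1 (p.2 * r) p.2 _).1 = 0)]
    simp [mkVtx, mul_div_cancel_left₀ _ (p.2.ne_zero)]⟩
  invFun w := ((w.1.1 : Matrix (Fin 2) (Fin 2) F) 0 0, Units.mk0 (dd w.1.1) (dir_some w.2).1)
  left_inv p := by
    ext
    · simp [coe_mkVtx]
    · simp [mkVtx]
  right_inv w := by
    obtain ⟨hd, hb⟩ := dir_some w.2
    apply Subtype.ext
    apply Subtype.ext
    apply Subtype.ext
    rw [coe_mkVtx]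
    ext i j
    fin_cases i <;> fin_cases j
    · simp
    · simpa [bb] using hb.symm
    · exact (w.1.1.2).symm
    · simp [dd]
  
/-- Vertices of direction `none`. -/
noncomputable def fiberNone :
    F × Fˣ ≃ {v : {x : t2 F // x ∉ nilSet F (t2 F)} // dir v = none} where
  toFun p := ⟨mkVtx p.1 p.2 0 (fun h => p.2.ne_zero h.2), by
    classical
    unfold dir
    rw [if_pos (by simp [mkVtx] : dd (mkVtx p.1 (p.2 : F) 0 _).1 = 0)]⟩
  invFun w := ((w.1.1 : Matrix (Fin 2) (Fin 2) F) 0 0, Units.mk0 (bb w.1.1) (dir_none w.2).2)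
  left_inv p := by
    ext
    · simp [coe_mkVtx]
    · simp [mkVtx]
  right_inv w := by
    obtain ⟨hd, hb⟩ := dir_none w.2
    apply Subtype.ext
    apply Subtype.ext
    apply Subtype.ext
    rw [coe_mkVtx]
    ext i j
    fin_cases i <;> fin_cases j
    · simp
    · rfl
    · exact (w.1.1.2).symm
    · simp only [dd] at hd
      simpa using (sub_eq_zero.mp hd)

/-- A fiber equiv for every direction. -/
noncomputable def fiberEquiv (t : Option F) :
    F × Fˣ ≃ {v : {x : t2 F // x ∉ nilSet F (t2 F)} // dir v = t} :=
  match t with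
  | none => fiberNone
  | some r => fiberSome r

end T2Aux

open T2Aux

theorem nilGraph_t2_components
    (F : Type*) [Field F] [Fintype F] :
    Nat.card ((nilGraph F (t2 F)).ConnectedComponent) = Fintype.card F + 1 ∧
    (∀ c : (nilGraph F (t2 F)).ConnectedComponent,
      Nat.card {v // (nilGraph F (t2 F)).connectedComponentMk v = c} =
        Fintype.card F * (Fintype.card F - 1)) ∧
    (∀ u v : {x : (t2 F) // x ∉ nilSet F (t2 F)},
      (nilGraph F (t2 F)).connectedComponentMk u =
        (nilGraph F (t2 F)).connectedComponentMk v →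
      u ≠ v → (nilGraph F (t2 F)).Adj u v) := by
  classical
  refine ⟨?_, ?_, ?_⟩
  · have e : (nilGraph F (t2 F)).ConnectedComponent ≃ Option F := by
      refine Equiv.ofBijective cdir ⟨?_, ?_⟩
      · intro c d
        refine SimpleGraph.ConnectedComponent.ind₂
          (β := fun c d => cdir c = cdir d → c = d) (fun u v h => ?_) c d
        exact (mk_eq_iff_dir u v).mpr h
      · intro t
        exact ⟨(nilGraph F (t2 F)).connectedComponentMk (fiberEquiv t (0, 1)).1,
          (fiberEquiv t (0, 1)).2⟩
    rw [Nat.card_congr e, Nat.card_eq_fintype_card, Fintype.card_option]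
  · intro c
    obtain ⟨u, hu⟩ := c.exists_rep
    have hu' : (nilGraph F (t2 F)).connectedComponentMk u = c := hu
    rw [← hu']
    have e1 : {v // (nilGraph F (t2 F)).connectedComponentMk v =
        (nilGraph F (t2 F)).connectedComponentMk u} ≃ F × Fˣ :=
      (Equiv.subtypeEquivRight (fun v => mk_eq_iff_dir v u)).trans (fiberEquiv (dir u)).symm
    rw [Nat.card_congr e1, Nat.card_prod, Nat.card_units, Nat.card_eq_fintype_card]
  · intro u v h hne
    exact (adj_iff u v).mpr ⟨hne, (dir_eq_iff_cross u v).mp ((mk_eq_iff_dir u v).mp h)⟩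
end
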